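/- Let G be a topological gyrogroup and 𝒰 an open base at the identity e. Then for every U ∈ 𝒰 and every b ∈ G, there exists V ∈ 𝒰 such that ⋃_{v ∈ V} gyr[v, b](V) ⊆ U. -/
import Mathlib


class Gyrogroup (G : Type*) where
  add : G → G → G
  e : G
  neg : G → G
  gyr : G → G → G → G
  e_add : ∀ x, add e x = x
  add_e : ∀ x, add x e = x
  neg_add : ∀ x, add (neg x) x = e
  add_neg : ∀ x, add x (neg x) = e
  gyr_bijective : ∀ a b, Function.Bijective (gyr a b)
  gyr_add : ∀ a b x y, gyr a b (add x y) = add (gyr a b x) (gyr a b y)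
  left_gyroassoc : ∀ a b c, add a (add b c) = add (add a b) (gyr a b c)
  left_loop : ∀ a b, gyr (add a b) b = gyr a b

open Gyrogroup

/-- The gyrogroup cooperation `a ⊞ b = a ⊕ gyr[a, ⊖b](b)`. -/
def Gyrogroup.coadd {G : Type*} [Gyrogroup G] (a b : G) : G :=
  add a (gyr a (neg b) b)

/-- The codifference `a ⊟ b = a ⊞ (⊖b)`. -/
def Gyrogroup.cosub {G : Type*} [Gyrogroup G] (a b : G) : G :=
  coadd a (neg b)

private lemma gyr_neg_self {G : Type*} [Gyrogroup G] (a x : G) :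
    gyr (neg a) a x = x := by
  -- first: left cancellation from gyr injectivity
  have key : ∀ b c : G, add (neg b) (add b c) = gyr (neg b) b c := by
    intro b c
    rw [left_gyroassoc, Gyrogroup.neg_add, e_add]
  have cancel : ∀ b x y : G, add b x = add b y → x = y := by
    intro b x y h
    have := congrArg (add (neg b)) h
    rw [key, key] at this
    exact (gyr_bijective (neg b) b).1 this
  -- gyr e a = id
  have gyr_e : ∀ (b c : G), gyr e b c = c := by
    intro b c
    have := left_gyroassoc e b c
    rw [e_add, e_add] at this
    exact (cancel b _ _ this.symm)
  have := left_loop (neg a) a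
  rw [Gyrogroup.neg_add] at this
  rw [← this, gyr_e]

private lemma gyro_neg_add_cancel {G : Type*} [Gyrogroup G] (a x : G) :
    add (neg a) (add a x) = x := by
  rw [left_gyroassoc, Gyrogroup.neg_add, e_add, gyr_neg_self]

private lemma gyr_eq {G : Type*} [Gyrogroup G] (v b w : G) :
    gyr v b w = add (neg (add v b)) (add v (add b w)) := by
  rw [left_gyroassoc v b w, gyro_neg_add_cancel]

theorem exists_V_gyr_subset {G : Type*} [Gyrogroup G] [TopologicalSpace G]
    (hadd : Continuous fun p : G × G => add p.1 p.2)
    (hneg : Continuous (neg : G → G))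
    (𝒰 : Set (Set G))
    (hopen : ∀ U ∈ 𝒰, IsOpen U ∧ (e : G) ∈ U)
    (hbase : ∀ W : Set G, IsOpen W → (e : G) ∈ W → ∃ U ∈ 𝒰, U ⊆ W) :
    ∀ U ∈ 𝒰, ∀ b : G, ∃ V ∈ 𝒰, ∀ v ∈ V, ∀ w ∈ V, gyr v b w ∈ U := by
  intro U hU b
  obtain ⟨hUopen, hUe⟩ := hopen U hU
  set f : G × G → G := fun p => add (neg (add p.1 b)) (add p.1 (add b p.2)) with hf
  have hc1 : Continuous fun p : G × G => add p.1 b :=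
    hadd.comp (continuous_fst.prodMk continuous_const)
  have hc2 : Continuous fun p : G × G => add b p.2 :=
    hadd.comp (continuous_const.prodMk continuous_snd)
  have hc3 : Continuous fun p : G × G => add p.1 (add b p.2) :=
    hadd.comp (continuous_fst.prodMk hc2)
  have hfc : Continuous f := hadd.comp ((hneg.comp hc1).prodMk hc3)
  have hfe : f (e, e) = e := by
    simp only [hf, e_add, add_e, Gyrogroup.neg_add]
  have hpre : IsOpen (f ⁻¹' U) := hUopen.preimage hfc
  have hmem : ((e : G), (e : G)) ∈ f ⁻¹' U := by
    simp [Set.mem_preimage, hfe, hUe]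
  obtain ⟨A, B, hA, hB, heA, heB, hAB⟩ := isOpen_prod_iff.1 hpre e e hmem
  obtain ⟨V, hV, hVsub⟩ := hbase (A ∩ B) (hA.inter hB) ⟨heA, heB⟩
  refine ⟨V, hV, fun v hv w hw => ?_⟩
  have : f (v, w) ∈ U := hAB ⟨(hVsub hv).1, (hVsub hw).2⟩
  rwa [gyr_eq]
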